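/- Let V be a finite-dimensional real inner product space and W ⊆ V a subspace of dimension n ≥ 4. For β ∈ V^* and v ∈ V define the endomorphism [β, v] := v ⊗ β − β^♯ ⊗ v^♭ + β(v)·I of V, where β^♯ ∈ V is the inner-product dual of β, v^♭ = ⟨v,·⟩, and v ⊗ β is the endomorphism x ↦ β(x)v. Suppose α : W × W → V^* is an alternating bilinear map satisfying [α(w₂, w₃), w₁] − [α(w₁, w₃), w₂] + [α(w₁, w₂), w₃] = 0 (as an endomorphism of V) for all w₁, w₂, w₃ ∈ W. Then α = 0. (In cohomological terms: H^{2,2}(so(ñ+1,1), W) = Z^{2,2}(so(ñ+1,1), W) = 0 for n ≥ 4.) -/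

import Mathlib

open RealInnerProductSpace Module

/-- The inner-product dual `β^♯ ∈ V` of a linear functional `β : V → ℝ`. -/
noncomputable def sharpDual {V : Type*} [NormedAddCommGroup V] [InnerProductSpace ℝ V]
    [FiniteDimensional ℝ V] (β : V →ₗ[ℝ] ℝ) : V :=
  (InnerProductSpace.toDual ℝ V).symm (LinearMap.toContinuousLinearMap β)

/-- The level-(1,−1) bracket of the graded Lie algebra `𝔰𝔬(ñ+1,1) = V + 𝔠𝔬(V) + V^*`:
`[β, v] = v ⊗ β − β^♯ ⊗ v^♭ + β(v)·I`. -/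
noncomputable def lev1Bracket {V : Type*} [NormedAddCommGroup V] [InnerProductSpace ℝ V]
    [FiniteDimensional ℝ V] (β : V →ₗ[ℝ] ℝ) (v : V) : V →ₗ[ℝ] V :=
  β.smulRight v - ((innerSL ℝ v : V →L[ℝ] ℝ) : V →ₗ[ℝ] ℝ).smulRight (sharpDual β)
    + β v • LinearMap.id

section aux
variable {V : Type*} [NormedAddCommGroup V] [InnerProductSpace ℝ V] [FiniteDimensional ℝ V]

lemma inner_sharpDual (β : V →ₗ[ℝ] ℝ) (y : V) : ⟪sharpDual β, y⟫ = β y := by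
  simp [sharpDual, InnerProductSpace.toDual_symm_apply]

lemma master (β1 β2 β3 : V →ₗ[ℝ] ℝ) (v1 v2 v3 : V)
    (h : lev1Bracket β1 v1 - lev1Bracket β2 v2 + lev1Bracket β3 v3 = 0) (x y : V) :
    β1 x * ⟪v1, y⟫ - β2 x * ⟪v2, y⟫ + β3 x * ⟪v3, y⟫
      - ⟪v1, x⟫ * β1 y + ⟪v2, x⟫ * β2 y - ⟪v3, x⟫ * β3 y
      + (β1 v1 - β2 v2 + β3 v3) * ⟪x, y⟫ = 0 := by
  have h' := congrArg (fun f : V →ₗ[ℝ] V => ⟪f x, y⟫) h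
  simp only [lev1Bracket, LinearMap.sub_apply, LinearMap.add_apply, LinearMap.smul_apply,
    LinearMap.smulRight_apply, LinearMap.id_apply, LinearMap.coe_coe,
    ContinuousLinearMap.coe_coe, innerSL_apply_apply,
    LinearMap.zero_apply, inner_zero_left, inner_add_left, inner_sub_left,
    real_inner_smul_left, inner_sharpDual, smul_eq_mul] at h'
  linarith

lemma upd0 {M : Type*} (a b c : M) : Function.update ![a, b] (0 : Fin 2) c = ![c, b] := by
  funext i; fin_cases i <;> simp [Function.update]

lemma upd1 {M : Type*} (a b c : M) : Function.update ![a, b] (1 : Fin 2) c = ![a, c] := by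
  funext i; fin_cases i <;> simp [Function.update]

end aux

/-- `H^{2,2}(𝔰𝔬(ñ+1,1), W) = Z^{2,2}(𝔰𝔬(ñ+1,1), W) = 0` for `dim W = n ≥ 4`: every
alternating bilinear `α : W × W → V^*` with
`[α(w₂,w₃), w₁] − [α(w₁,w₃), w₂] + [α(w₁,w₂), w₃] = 0` vanishes. -/
theorem conformal_spencer22_cocycle_eq_zero
    (V : Type*) [NormedAddCommGroup V] [InnerProductSpace ℝ V] [FiniteDimensional ℝ V]
    (W : Submodule ℝ V) (hn : 4 ≤ finrank ℝ W)
    (α : W [⋀^Fin 2]→ₗ[ℝ] (V →ₗ[ℝ] ℝ))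
    (hcocycle : ∀ w₁ w₂ w₃ : W,
      lev1Bracket (α ![w₂, w₃]) ↑w₁ - lev1Bracket (α ![w₁, w₃]) ↑w₂
        + lev1Bracket (α ![w₁, w₂]) ↑w₃ = 0) :
    α = 0 := by
  classical
  set N := finrank ℝ W with hNdef
  let e : OrthonormalBasis (Fin N) ℝ W := stdOrthonormalBasis ℝ W
  have he : ∀ i j : Fin N, ⟪((e i : W) : V), ((e j : W) : V)⟫ = if i = j then 1 else 0 := by
    intro i j
    have h := orthonormal_iff_ite.mp e.orthonormal i j
    rwa [Submodule.coe_inner] at h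
  have M : ∀ (w1 w2 w3 : W) (x y : V),
      α ![w2, w3] x * ⟪(w1 : V), y⟫ - α ![w1, w3] x * ⟪(w2 : V), y⟫
        + α ![w1, w2] x * ⟪(w3 : V), y⟫
        - ⟪(w1 : V), x⟫ * α ![w2, w3] y + ⟪(w2 : V), x⟫ * α ![w1, w3] y
        - ⟪(w3 : V), x⟫ * α ![w1, w2] y
        + (α ![w2, w3] ↑w1 - α ![w1, w3] ↑w2 + α ![w1, w2] ↑w3) * ⟪x, y⟫ = 0 :=
    fun w1 w2 w3 x y => master _ _ _ _ _ _ (hcocycle w1 w2 w3) x y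
  -- picking fresh indices
  have pick : ∀ a b c : Fin N, ∃ i, i ≠ a ∧ i ≠ b ∧ i ≠ c := by
    intro a b c
    have h3 : ({a, b, c} : Finset (Fin N)).card ≤ 3 := by
      refine le_trans (Finset.card_insert_le _ _) ?_
      have := Finset.card_insert_le b ({c} : Finset (Fin N))
      simp at this ⊢; omega
    by_contra h
    push_neg at h
    have hsub : (Finset.univ : Finset (Fin N)) ⊆ {a, b, c} := by
      intro i _
      simp only [Finset.mem_insert, Finset.mem_singleton]
      by_cases h1 : i = a
      · tauto
      by_cases h2 : i = b
      · tauto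
      exact Or.inr (Or.inr (h i h1 h2))
    have := Finset.card_le_card hsub
    simp [Finset.card_univ] at this
    omega
  -- Z1 : for pairwise distinct i,j,k,l, α ![e j, e k] (e l) = 0
  have Z1 : ∀ i j k l : Fin N, i ≠ j → i ≠ k → i ≠ l → j ≠ k → j ≠ l → k ≠ l →
      α ![e j, e k] ((e l : W) : V) = 0 := by
    intro i j k l hij hik hil hjk hjl hkl
    have h := M (e i) (e j) (e k) ((e i : W) : V) ((e l : W) : V)
    simp only [he, eq_self_iff_true, if_true, if_neg hij, if_neg hik, if_neg hil, if_neg hjk, if_neg hjl,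
      if_neg hkl, if_neg hij.symm, if_neg hik.symm, if_neg hil.symm, if_neg hjk.symm,
      if_neg hjl.symm, if_neg hkl.symm] at h
    linarith
  -- Z2 : for pairwise distinct i,j,k: α![e j, e k](e j) + α![e i, e k](e i) = 0
  have Z2 : ∀ i j k : Fin N, i ≠ j → i ≠ k → j ≠ k →
      α ![e j, e k] ((e j : W) : V) + α ![e i, e k] ((e i : W) : V) = 0 := by
    intro i j k hij hik hjk
    have h := M (e i) (e j) (e k) ((e j : W) : V) ((e i : W) : V)
    simp only [he, eq_self_iff_true, if_true, if_neg hij, if_neg hik, if_neg hjk, if_neg hij.symm,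
      if_neg hik.symm, if_neg hjk.symm] at h
    linarith
  -- swap
  have hswap : ∀ a b : W, α ![a, b] = - α ![b, a] := by
    intro a b
    have h := α.map_swap (v := ![b, a]) (i := (0 : Fin 2)) (j := 1) (by decide)
    have hv : ![b, a] ∘ Equiv.swap (0 : Fin 2) 1 = ![a, b] := by
      funext i; fin_cases i <;> simp [Equiv.swap_apply_of_ne_of_ne]
    rw [hv] at h; rw [h]
  -- Z3 : j ≠ k → α ![e j, e k] (e j) = 0
  have Z3 : ∀ j k : Fin N, j ≠ k → α ![e j, e k] ((e j : W) : V) = 0 := by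
    intro j k hjk
    obtain ⟨i, hij, hik, -⟩ := pick j k k
    obtain ⟨l, hli, hlj, hlk⟩ := pick i j k
    have h1 := Z2 i j k hij hik hjk
    have h2 := Z2 l j k hlj hlk hjk
    have h3 := Z2 i l k (Ne.symm hli) hik hlk
    linarith
  -- Z4 : j ≠ k → α ![e j, e k] (e k) = 0
  have Z4 : ∀ j k : Fin N, j ≠ k → α ![e j, e k] ((e k : W) : V) = 0 := by
    intro j k hjk
    rw [hswap]
    simp [Z3 k j hjk.symm]
  -- Z5 : α ![e j, e k] y = 0 for y in the orthogonal complement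
  have Z5 : ∀ j k : Fin N, j ≠ k → ∀ y ∈ Wᗮ, α ![e j, e k] y = 0 := by
    intro j k hjk y hy
    obtain ⟨i, hij, hik, -⟩ := pick j k k
    have hy' : ∀ m : Fin N, ⟪((e m : W) : V), y⟫ = 0 := fun m =>
      Submodule.inner_right_of_mem_orthogonal (e m).2 hy
    have h := M (e i) (e j) (e k) ((e i : W) : V) y
    simp only [he, eq_self_iff_true, if_true, if_neg hij, if_neg hik, if_neg hjk, if_neg hij.symm,
      if_neg hik.symm, if_neg hjk.symm, hy'] at h
    linarith
  -- Z6 : α ![e j, e k] vanishes on all basis vectors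
  have Z6 : ∀ j k l : Fin N, j ≠ k → α ![e j, e k] ((e l : W) : V) = 0 := by
    intro j k l hjk
    by_cases hlj : l = j
    · subst hlj; exact Z3 l k hjk
    by_cases hlk : l = k
    · subst hlk; exact Z4 j l hjk
    obtain ⟨i, hij, hik, hil⟩ := pick j k l
    exact Z1 i j k l hij hik hil hjk (fun h => hlj h.symm) (fun h => hlk h.symm)
  -- Z7 : α ![e j, e k] = 0 for j ≠ k
  have Z7 : ∀ j k : Fin N, j ≠ k → α ![e j, e k] = 0 := by
    intro j k hjk
    ext x
    have hx : x ∈ W ⊔ Wᗮ := by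
      rw [Submodule.sup_orthogonal_of_hasOrthogonalProjection]; exact Submodule.mem_top
    obtain ⟨a, ha, b, hb, rfl⟩ := Submodule.mem_sup.mp hx
    have haW : α ![e j, e k] a = 0 := by
      have hsum := e.sum_repr ⟨a, ha⟩
      have : a = ∑ i, e.repr ⟨a, ha⟩ i • ((e i : W) : V) := by
        conv_lhs => rw [show a = ((⟨a, ha⟩ : W) : V) from rfl, ← hsum]
        push_cast
        rfl
      rw [this, map_sum]
      simp [Z6 j k _ hjk]
    simp [haW, Z5 j k hjk b hb]
  -- Z8 : all basis values vanish
  have Z8 : ∀ j k : Fin N, α ![e j, e k] = 0 := by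
    intro j k
    by_cases hjk : j = k
    · subst hjk
      exact α.map_eq_zero_of_eq ![e j, e j] (i := 0) (j := 1) rfl (by decide)
    · exact Z7 j k hjk
  -- bilinear extension
  let F : W →ₗ[ℝ] W →ₗ[ℝ] (V →ₗ[ℝ] ℝ) :=
    LinearMap.mk₂ ℝ (fun u w => α ![u, w])
      (fun u u' w => by simpa [upd0] using α.toMultilinearMap.map_update_add ![u, w] 0 u u')
      (fun c u w => by simpa [upd0] using α.toMultilinearMap.map_update_smul ![u, w] 0 c u)
      (fun u w w' => by simpa [upd1] using α.toMultilinearMap.map_update_add ![u, w] 1 w w')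
      (fun c u w => by simpa [upd1] using α.toMultilinearMap.map_update_smul ![u, w] 1 c w)
  have hF : F = 0 := by
    apply e.toBasis.ext
    intro i
    apply e.toBasis.ext
    intro j
    simp only [OrthonormalBasis.coe_toBasis, LinearMap.zero_apply]
    exact Z8 i j
  ext v
  have hv : v = ![v 0, v 1] := by
    funext i; fin_cases i <;> rfl
  have : α ![v 0, v 1] = F (v 0) (v 1) := rfl
  rw [hv, this, hF]
  rfl
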